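/- (Szőkefalvi Nagy inequality) If a_1, …, a_k are nonnegative real numbers with R = max_j a_j and r = min_j a_j, then k·Σ_j a_j² − (Σ_j a_j)² ≥ (k/2)·(R − r)². -/

import Mathlib

theorem szokefalvi_nagy (k : ℕ) (hk : 1 ≤ k) (a : Fin k → ℝ) (ha : ∀ j, 0 ≤ a j)
    (R r : ℝ) (hR : IsGreatest (Set.range a) R) (hr : IsLeast (Set.range a) r) :
    (k : ℝ) * ∑ j, (a j)^2 - (∑ j, a j)^2 ≥ (k : ℝ) / 2 * (R - r)^2 := by
  obtain ⟨⟨p, hp⟩, hRub⟩ := hR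
  obtain ⟨⟨q, hq⟩, hrlb⟩ := hr
  have hk' : (0:ℝ) < k := by exact_mod_cast hk
  set S := ∑ j, a j with hS
  set m := S / k with hm
  have hkm : (k:ℝ) * m = S := by rw [hm]; field_simp [hk'.ne']
  have expand : ∑ j, (a j - m)^2 = (∑ j, (a j)^2) - 2*m*S + k*m^2 := by
    have e : ∀ j, (a j - m)^2 = (a j)^2 - 2*m*(a j) + m^2 := fun j => by ring
    simp_rw [e]
    rw [Finset.sum_add_distrib, Finset.sum_sub_distrib, ← Finset.mul_sum,
      Finset.sum_const, Finset.card_univ, Fintype.card_fin, nsmul_eq_mul, ← hS]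
  have hid : (k:ℝ) * ∑ j, (a j - m)^2 = (k:ℝ) * ∑ j, (a j)^2 - S^2 := by
    rw [expand]; nlinarith [hkm]
  by_cases hpq : p = q
  · have hRr : R = r := by rw [← hp, hpq, hq]
    have hnn : (0:ℝ) ≤ ∑ j, (a j - m)^2 :=
      Finset.sum_nonneg fun j _ => sq_nonneg _
    have h0 : (R - r)^2 = 0 := by rw [hRr]; ring
    have := mul_nonneg hk'.le hnn
    nlinarith [hid]
  · have hpair : (a p - m)^2 + (a q - m)^2 ≤ ∑ j, (a j - m)^2 := by
      have h := Finset.sum_le_sum_of_subset_of_nonneg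
        (Finset.subset_univ ({p, q} : Finset (Fin k)))
        (fun j _ _ => sq_nonneg (a j - m))
      rwa [Finset.sum_pair hpq] at h
    rw [hp] at hpair; rw [hq] at hpair
    have half : (R - r)^2 / 2 ≤ (R - m)^2 + (r - m)^2 := by
      nlinarith [sq_nonneg (R + r - 2*m)]
    have hT : (R - r)^2 / 2 ≤ ∑ j, (a j - m)^2 := le_trans half hpair
    have := mul_le_mul_of_nonneg_left hT (le_of_lt hk')
    nlinarith [hid]
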